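/- Let q_1,…,q_k ∈ P(m,3) and let J(q_1,…,q_k) := {Σ_{i=1}^k r_i q_i : r_i ∈ P(m,d−3)}. Let β ∈ P_m be such that wt(β) < 2^{d−3} and there exist some i ∈ [k] and x ∈ supp(β) with q_i(x) ≠ 0. If A : P(m,d) → ℝ is folded over J(q_1,…,q_k), i.e., A is constant on cosets of J(q_1,…,q_k) in P(m,d), then the Fourier coefficient Â_β = 0. -/

import Mathlib

open scoped BigOperators Classical

noncomputable section

/-- `P(m,d)`: the `F₂`-space of functions `F₂^m → F₂` expressible as multivariate
polynomials of total degree at most `d` (the span of multilinear monomials of degree `≤ d`). -/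
def polySpace (m d : ℕ) : Submodule (ZMod 2) ((Fin m → ZMod 2) → ZMod 2) :=
  Submodule.span (ZMod 2) {f | ∃ S : Finset (Fin m), S.card ≤ d ∧ f = fun x => ∏ i ∈ S, x i}

/-- `⟨f,g⟩ = ∑_{x ∈ F₂^m} f(x)g(x) ∈ F₂`. -/
def fdot {m : ℕ} (f g : (Fin m → ZMod 2) → ZMod 2) : ZMod 2 :=
  ∑ x, f x * g x

/-- The Fourier coefficient `Â_β = E_{f ∼ P(m,d)}[A(f) χ_β(f)]`. -/
def rmFourierCoeff {m d : ℕ} (A : polySpace m d → ℝ) (β : (Fin m → ZMod 2) → ZMod 2) : ℝ :=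
  (Fintype.card (polySpace m d) : ℝ)⁻¹ *
    ∑ f : polySpace m d, A f * (-1 : ℝ) ^ (fdot β (f : (Fin m → ZMod 2) → ZMod 2)).val

/-- `J(q₁,…,q_k) = {∑ᵢ rᵢ qᵢ : rᵢ ∈ P(m,d−3)}`. -/
def Jset {m : ℕ} (d k : ℕ) (q : Fin k → (Fin m → ZMod 2) → ZMod 2) :
    Set ((Fin m → ZMod 2) → ZMod 2) :=
  {g | ∃ r : Fin k → (Fin m → ZMod 2) → ZMod 2,
    (∀ i, r i ∈ polySpace m (d - 3)) ∧ g = ∑ i, r i * q i}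

lemma zmod2_cases : ∀ a : ZMod 2, a = 0 ∨ a = 1 := by decide

lemma prod_mul_prod {m : ℕ} (S T : Finset (Fin m)) (x : Fin m → ZMod 2) :
    (∏ i ∈ S, x i) * ∏ i ∈ T, x i = ∏ i ∈ S ∪ T, x i := by
  by_cases h : ∀ i ∈ S ∪ T, x i = 1
  · rw [Finset.prod_eq_one (fun i hi => h i (Finset.mem_union_left _ hi)),
      Finset.prod_eq_one (fun i hi => h i (Finset.mem_union_right _ hi)),
      Finset.prod_eq_one h, one_mul]
  · push_neg at h
    obtain ⟨i, hi, hne⟩ := h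
    have hzero : x i = 0 := (zmod2_cases (x i)).resolve_right hne
    rw [Finset.prod_eq_zero hi hzero]
    rcases Finset.mem_union.mp hi with h' | h'
    · rw [Finset.prod_eq_zero h' hzero, zero_mul]
    · rw [Finset.prod_eq_zero h' hzero, mul_zero]

lemma polySpace_mul {m a b : ℕ} {f g : (Fin m → ZMod 2) → ZMod 2}
    (hf : f ∈ polySpace m a) (hg : g ∈ polySpace m b) : f * g ∈ polySpace m (a + b) := by
  induction hf using Submodule.span_induction with
  | mem f hf =>
    obtain ⟨S, hS, rfl⟩ := hf
    induction hg using Submodule.span_induction with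
    | mem g hg =>
      obtain ⟨T, hT, rfl⟩ := hg
      apply Submodule.subset_span
      refine ⟨S ∪ T, le_trans (Finset.card_union_le S T) (Nat.add_le_add hS hT), ?_⟩
      funext x
      exact prod_mul_prod S T x
    | zero => rw [mul_zero]; exact zero_mem _
    | add g₁ g₂ _ _ h₁ h₂ => rw [mul_add]; exact add_mem h₁ h₂
    | smul c g _ h => rw [mul_smul_comm]; exact Submodule.smul_mem _ c h
  | zero => rw [zero_mul]; exact zero_mem _
  | add f₁ f₂ _ _ h₁ h₂ => rw [add_mul]; exact add_mem h₁ h₂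
  | smul c f _ h => rw [smul_mul_assoc]; exact Submodule.smul_mem _ c h

lemma one_mem_polySpace {m e : ℕ} : (fun _ : Fin m → ZMod 2 => (1 : ZMod 2)) ∈ polySpace m e :=
  Submodule.subset_span ⟨∅, by simp⟩

lemma ind_mem_polySpace {m : ℕ} (i : Fin m) (c : ZMod 2) :
    (fun z : Fin m → ZMod 2 => if z i = c then (1 : ZMod 2) else 0) ∈ polySpace m 1 := by
  have hx : (fun z : Fin m → ZMod 2 => z i) ∈ polySpace m 1 :=
    Submodule.subset_span ⟨{i}, by simp⟩
  have hconst : (fun _ : Fin m → ZMod 2 => (c + 1 : ZMod 2)) ∈ polySpace m 1 := by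
    have h := Submodule.smul_mem (polySpace m 1) (c + 1) (one_mem_polySpace (m := m) (e := 1))
    have heq : ((c + 1) • fun _ : Fin m → ZMod 2 => (1 : ZMod 2))
        = fun _ : Fin m → ZMod 2 => (c + 1 : ZMod 2) := by
      funext z; simp [Pi.smul_apply, smul_eq_mul]
    rwa [heq] at h
  have heq : (fun z : Fin m → ZMod 2 => if z i = c then (1 : ZMod 2) else 0)
      = (fun z : Fin m → ZMod 2 => z i) + (fun _ => (c + 1 : ZMod 2)) := by
    funext z
    rcases zmod2_cases (z i) with h | h <;> rcases zmod2_cases c with h' | h' <;>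
      simp [h, h'] <;> decide
  rw [heq]
  exact add_mem hx hconst

lemma odd_card_sum {m : ℕ} (w : (Fin m → ZMod 2) → ZMod 2) :
    ∑ x, w x = ((Finset.univ.filter fun x => w x = 1).card : ZMod 2) := by
  have : ∀ x, w x = if w x = 1 then (1 : ZMod 2) else 0 := by
    intro x; rcases zmod2_cases (w x) with h | h <;> simp [h]
  rw [Finset.sum_congr rfl fun x _ => this x, Finset.sum_boole]

lemma exists_dual_poly {m : ℕ} : ∀ e : ℕ, ∀ w : (Fin m → ZMod 2) → ZMod 2,
    0 < (Finset.univ.filter fun x => w x = 1).card →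
    (Finset.univ.filter fun x => w x = 1).card < 2 ^ e →
    ∃ r ∈ polySpace m e, ∑ x, r x * w x = 1 := by
  intro e
  induction e with
  | zero =>
    intro w h1 h2
    simp only [pow_zero] at h2; omega
  | succ e ih =>
    intro w hpos hlt
    set s := (Finset.univ.filter fun x => w x = 1).card with hs
    by_cases hodd : Odd s
    · refine ⟨fun _ => 1, one_mem_polySpace, ?_⟩
      simp only [one_mul]
      rw [odd_card_sum w, ← hs]
      obtain ⟨t, ht⟩ := hodd
      rw [ht]
      push_cast
      rw [show ((2 : ZMod 2)) = 0 by decide]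
      ring
    · -- s is even, s ≥ 2: find two support points differing in coordinate i
      have hs2 : 2 ≤ s := by
        obtain ⟨t, ht⟩ := (Nat.even_or_odd s).resolve_right hodd
        omega
      obtain ⟨a, ha, b, hb, hab⟩ := Finset.one_lt_card.mp (by omega :
        1 < (Finset.univ.filter fun x => w x = 1).card)
      simp only [Finset.mem_filter] at ha hb
      obtain ⟨i, hi⟩ := Function.ne_iff.mp hab
      -- split the support by coordinate i
      have hsplit : (Finset.univ.filter fun z => w z = 1 ∧ z i = a i).card
          + (Finset.univ.filter fun z => w z = 1 ∧ z i = b i).card = s := by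
        have hneg : ∀ z : Fin m → ZMod 2, ¬ z i = a i ↔ z i = b i := by
          intro z
          rcases zmod2_cases (z i) with h | h <;> rcases zmod2_cases (a i) with h' | h' <;>
            rcases zmod2_cases (b i) with h'' | h'' <;> simp_all
        have h2 : (Finset.univ.filter fun z => w z = 1 ∧ z i = b i)
            = Finset.univ.filter fun z => w z = 1 ∧ ¬ z i = a i := by
          apply Finset.filter_congr
          intro z _
          simp [hneg z]
        have h3 := Finset.card_filter_add_card_filter_not
          (s := Finset.univ.filter fun x => w x = 1) (p := fun z => z i = a i)
        rw [Finset.filter_filter, Finset.filter_filter] at h3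
        rw [h2, hs]
        exact h3
      have hamem : a ∈ Finset.univ.filter fun z => w z = 1 ∧ z i = a i := by
        simp [ha.2]
      have hbmem : b ∈ Finset.univ.filter fun z => w z = 1 ∧ z i = b i := by
        simp [hb.2]
      have hpow : 2 ^ (e + 1) = 2 ^ e + 2 ^ e := by ring
      -- choose the half with small support
      obtain ⟨c, hcpos, hclt⟩ : ∃ c : ZMod 2,
          0 < (Finset.univ.filter fun z => w z = 1 ∧ z i = c).card ∧
          (Finset.univ.filter fun z => w z = 1 ∧ z i = c).card < 2 ^ e := by
        rcases Nat.lt_or_ge (Finset.univ.filter fun z => w z = 1 ∧ z i = a i).card (2 ^ e)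
          with h | h
        · exact ⟨a i, Finset.card_pos.mpr ⟨a, hamem⟩, h⟩
        · refine ⟨b i, Finset.card_pos.mpr ⟨b, hbmem⟩, ?_⟩
          set nA := (Finset.univ.filter fun z => w z = 1 ∧ z i = a i).card with hnA
          set nB := (Finset.univ.filter fun z => w z = 1 ∧ z i = b i).card with hnB
          by_contra hge
          rw [not_lt] at hge
          have h5 : 2 ^ e + 2 ^ e ≤ nA + nB := Nat.add_le_add h hge
          rw [hsplit, ← hpow] at h5
          exact absurd hlt (not_lt.mpr h5)
      -- apply IH to the restricted function
      set w' : (Fin m → ZMod 2) → ZMod 2 := fun z => if z i = c then w z else 0 with hw'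
      have hfilter : (Finset.univ.filter fun z => w' z = 1)
          = Finset.univ.filter fun z => w z = 1 ∧ z i = c := by
        apply Finset.filter_congr
        intro z _
        simp only [hw']
        split_ifs with h <;> simp [h]
      obtain ⟨r', hr'mem, hr'sum⟩ := ih w' (by rw [hfilter]; exact hcpos)
        (by rw [hfilter]; exact hclt)
      refine ⟨fun z => r' z * (if z i = c then 1 else 0), ?_, ?_⟩
      · exact polySpace_mul hr'mem (ind_mem_polySpace i c)
      · have hcalc : ∑ z, r' z * (if z i = c then (1 : ZMod 2) else 0) * w z
            = ∑ z, r' z * w' z := by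
          apply Finset.sum_congr rfl
          intro z _
          simp only [hw']
          split_ifs with h <;> ring
        exact hcalc.trans hr'sum

lemma neg_one_pow_succ_val (a : ZMod 2) : (-1 : ℝ) ^ ((a + 1).val) = -(-1 : ℝ) ^ a.val := by
  rcases zmod2_cases a with h | h <;> subst h
  · rw [show ((0 : ZMod 2) + 1).val = 1 by decide, show (0 : ZMod 2).val = 0 by decide]
    norm_num
  · rw [show ((1 : ZMod 2) + 1).val = 0 by decide, show (1 : ZMod 2).val = 1 by decide]
    norm_num

/-- a function folded over `J(q₁,…,q_k)` has no Fourier weight on any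
small-support character `β` whose support contains a point violating one of the `qᵢ`. -/
theorem folded_over_J_fourier_vanish (m d k : ℕ)
    (q : Fin k → (Fin m → ZMod 2) → ZMod 2) (hq : ∀ i, q i ∈ polySpace m 3)
    (β : (Fin m → ZMod 2) → ZMod 2)
    (hwt : (Finset.univ.filter fun x => β x = 1).card < 2 ^ (d - 3))
    (hviol : ∃ i : Fin k, ∃ x : Fin m → ZMod 2, β x = 1 ∧ q i x ≠ 0)
    (A : polySpace m d → ℝ)
    (hfold : ∀ f g : polySpace m d,
      ((g : (Fin m → ZMod 2) → ZMod 2) - (f : (Fin m → ZMod 2) → ZMod 2)) ∈ Jset d k q →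
      A g = A f) :
    rmFourierCoeff A β = 0 := by
  classical
  obtain ⟨i, x₀, hβx₀, hqx₀⟩ := hviol
  have hx₀mem : x₀ ∈ Finset.univ.filter fun x => β x = 1 := by simp [hβx₀]
  have hd3 : 3 ≤ d := by
    by_contra h
    rw [not_le] at h
    have hz : d - 3 = 0 := by omega
    rw [hz, pow_zero] at hwt
    have := Finset.card_pos.mpr ⟨x₀, hx₀mem⟩
    omega
  set w : (Fin m → ZMod 2) → ZMod 2 := fun z => β z * q i z with hw
  have hwsub : (Finset.univ.filter fun z => w z = 1) ⊆ Finset.univ.filter fun z => β z = 1 := by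
    intro z hz
    simp only [Finset.mem_filter, hw] at hz ⊢
    refine ⟨Finset.mem_univ _, ?_⟩
    rcases zmod2_cases (β z) with h | h
    · rw [h, zero_mul] at hz
      exact absurd hz.2 (by decide)
    · exact h
  have hwpos : 0 < (Finset.univ.filter fun z => w z = 1).card := by
    apply Finset.card_pos.mpr
    refine ⟨x₀, ?_⟩
    simp only [Finset.mem_filter, hw]
    have hq1 : q i x₀ = 1 := (zmod2_cases _).resolve_left hqx₀
    exact ⟨Finset.mem_univ _, by rw [hβx₀, hq1, one_mul]⟩
  have hwlt : (Finset.univ.filter fun z => w z = 1).card < 2 ^ (d - 3) :=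
    lt_of_le_of_lt (Finset.card_le_card hwsub) hwt
  obtain ⟨r, hrmem, hrsum⟩ := exists_dual_poly (d - 3) w hwpos hwlt
  set g₀ : (Fin m → ZMod 2) → ZMod 2 := r * q i with hg₀
  have hg₀mem : g₀ ∈ polySpace m d := by
    have h := polySpace_mul hrmem (hq i)
    rwa [show d - 3 + 3 = d from Nat.sub_add_cancel hd3] at h
  have hg₀J : g₀ ∈ Jset d k q := by
    refine ⟨fun j => if j = i then r else 0, fun j => ?_, ?_⟩
    · dsimp only
      split
      · exact hrmem
      · exact zero_mem _
    · rw [Finset.sum_eq_single i]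
      · simp [hg₀]
      · intro j _ hji
        simp [hji]
      · intro h
        exact absurd (Finset.mem_univ i) h
  have hg₀dot : fdot β g₀ = 1 := by
    simp only [fdot]
    rw [← hrsum]
    apply Finset.sum_congr rfl
    intro z _
    simp only [hg₀, Pi.mul_apply, hw]
    ring
  set G : polySpace m d := ⟨g₀, hg₀mem⟩ with hG
  have hAshift : ∀ f : polySpace m d, A (f + G) = A f := by
    intro f
    apply hfold
    have hcoe : ((f + G : polySpace m d) : (Fin m → ZMod 2) → ZMod 2)
        = (f : (Fin m → ZMod 2) → ZMod 2) + g₀ := rfl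
    rw [hcoe, add_sub_cancel_left]
    exact hg₀J
  have hχ : ∀ f : polySpace m d,
      (-1 : ℝ) ^ (fdot β ((f + G : polySpace m d) : (Fin m → ZMod 2) → ZMod 2)).val
        = -(-1 : ℝ) ^ (fdot β (f : (Fin m → ZMod 2) → ZMod 2)).val := by
    intro f
    have h1 : fdot β ((f + G : polySpace m d) : (Fin m → ZMod 2) → ZMod 2)
        = fdot β (f : (Fin m → ZMod 2) → ZMod 2) + 1 := by
      have hcoe : ((f + G : polySpace m d) : (Fin m → ZMod 2) → ZMod 2)
          = (f : (Fin m → ZMod 2) → ZMod 2) + g₀ := rfl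
      rw [hcoe]
      conv_rhs => rw [← hg₀dot]
      simp only [fdot, Pi.add_apply]
      rw [← Finset.sum_add_distrib]
      apply Finset.sum_congr rfl
      intro z _
      ring
    rw [h1, neg_one_pow_succ_val]
  have hsum : (∑ f : polySpace m d,
      A f * (-1 : ℝ) ^ (fdot β (f : (Fin m → ZMod 2) → ZMod 2)).val) = 0 := by
    have hre : (∑ f : polySpace m d, A (f + G) *
          (-1 : ℝ) ^ (fdot β ((f + G : polySpace m d) : (Fin m → ZMod 2) → ZMod 2)).val)
        = ∑ f : polySpace m d,
          A f * (-1 : ℝ) ^ (fdot β (f : (Fin m → ZMod 2) → ZMod 2)).val :=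
      Fintype.sum_equiv (Equiv.addRight G) _ _ (fun f => rfl)
    have h2 : (∑ f : polySpace m d, A (f + G) *
          (-1 : ℝ) ^ (fdot β ((f + G : polySpace m d) : (Fin m → ZMod 2) → ZMod 2)).val)
        = -∑ f : polySpace m d,
          A f * (-1 : ℝ) ^ (fdot β (f : (Fin m → ZMod 2) → ZMod 2)).val := by
      rw [← Finset.sum_neg_distrib]
      apply Finset.sum_congr rfl
      intro f _
      rw [hAshift f, hχ f]
      ring
    have h4 := hre.symm.trans h2
    linarith
  rw [rmFourierCoeff, hsum, mul_zero]
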